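/- Let C ∈ ℝ^{M×N} with σ := ‖C‖_op > 0, and suppose u ∈ ℝ^M and v ∈ ℝ^N are unit vectors with Cv = σu and Cᵀu = σv, and that the largest singular value of C is simple, i.e. ‖Cw‖ < σ for every unit vector w ∈ ℝ^N orthogonal to v. Then the map E ↦ ‖C + E‖_op² is Fréchet differentiable at E = 0 with derivative E ↦ 2σ·uᵀEv; that is, for every ε > 0 there exists δ > 0 such that for all E ∈ ℝ^{M×N} with 0 < ‖E‖_F < δ: | ‖C + E‖_op² − σ² − 2σ·uᵀEv | ≤ ε·‖E‖_F. -/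
import Mathlib


open scoped BigOperators
open Matrix

noncomputable section

/-- Squared Frobenius norm of a real matrix: `‖A‖_F² = ∑ᵢⱼ A i j ^ 2`. -/
def frobSq {M N : ℕ} (A : Matrix (Fin M) (Fin N) ℝ) : ℝ := ∑ i, ∑ j, A i j ^ 2

/-- Squared Euclidean norm of a vector. -/
def vnormSq {n : ℕ} (x : Fin n → ℝ) : ℝ := ∑ i, x i ^ 2

/-- Euclidean inner product of two vectors. -/
def vdot {n : ℕ} (x y : Fin n → ℝ) : ℝ := ∑ i, x i * y i

/-- The spectral (ℓ²-operator) norm of a real matrix: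
`‖A‖_op = sup { ‖Ax‖ : ‖x‖ = 1 }`, which equals the largest singular value. -/
def opNorm {M N : ℕ} (A : Matrix (Fin M) (Fin N) ℝ) : ℝ :=
  sSup {r : ℝ | ∃ x : Fin N → ℝ, vnormSq x = 1 ∧ r = Real.sqrt (vnormSq (A.mulVec x))}

set_option maxHeartbeats 1000000

namespace S11
variable {m n : ℕ}

lemma vnormSq_nonneg (x : Fin n → ℝ) : 0 ≤ vnormSq x :=
  Finset.sum_nonneg fun _ _ => sq_nonneg _

lemma frobSq_nonneg (A : Matrix (Fin m) (Fin n) ℝ) : 0 ≤ frobSq A :=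
  Finset.sum_nonneg fun _ _ => Finset.sum_nonneg fun _ _ => sq_nonneg _

lemma vnormSq_eq_zero {x : Fin n → ℝ} (h : vnormSq x = 0) : x = 0 := by
  funext i
  have := (Finset.sum_eq_zero_iff_of_nonneg (fun i _ => sq_nonneg (x i))).1 h i (Finset.mem_univ i)
  exact pow_eq_zero_iff (n := 2) (by norm_num) |>.1 this

lemma vdot_comm (x y : Fin n → ℝ) : vdot x y = vdot y x := by
  simp [vdot, mul_comm]

lemma vdot_self (x : Fin n → ℝ) : vdot x x = vnormSq x := by
  simp [vdot, vnormSq, sq]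

lemma vdot_add_left (x y z : Fin n → ℝ) : vdot (x + y) z = vdot x z + vdot y z := by
  simp [vdot, add_mul, Finset.sum_add_distrib]

lemma vdot_add_right (x y z : Fin n → ℝ) : vdot x (y + z) = vdot x y + vdot x z := by
  simp [vdot, mul_add, Finset.sum_add_distrib]

lemma vdot_smul_left (c : ℝ) (x y : Fin n → ℝ) : vdot (c • x) y = c * vdot x y := by
  simp [vdot, Finset.mul_sum, mul_assoc]

lemma vdot_smul_right (c : ℝ) (x y : Fin n → ℝ) : vdot x (c • y) = c * vdot x y := by
  simp [vdot, Finset.mul_sum]; apply Finset.sum_congr rfl; intros; ring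

lemma vdot_sub_left (x y z : Fin n → ℝ) : vdot (x - y) z = vdot x z - vdot y z := by
  simp [vdot, sub_mul, Finset.sum_sub_distrib]

lemma vnormSq_add (x y : Fin n → ℝ) :
    vnormSq (x + y) = vnormSq x + 2 * vdot x y + vnormSq y := by
  simp only [vnormSq, vdot, Pi.add_apply, Finset.mul_sum, ← Finset.sum_add_distrib]
  apply Finset.sum_congr rfl; intros; ring

lemma vnormSq_smul (c : ℝ) (x : Fin n → ℝ) : vnormSq (c • x) = c ^ 2 * vnormSq x := by
  simp [vnormSq, Finset.mul_sum, mul_pow]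

lemma cauchy (x y : Fin n → ℝ) : (vdot x y) ^ 2 ≤ vnormSq x * vnormSq y :=
  Finset.sum_mul_sq_le_sq_mul_sq _ _ _

lemma adjoint (A : Matrix (Fin m) (Fin n) ℝ) (x : Fin n → ℝ) (y : Fin m → ℝ) :
    vdot (A.mulVec x) y = vdot x (Aᵀ.mulVec y) := by
  simp only [vdot, Matrix.mulVec, dotProduct, Matrix.transpose_apply,
    Finset.sum_mul, Finset.mul_sum]
  rw [Finset.sum_comm]
  apply Finset.sum_congr rfl; intros; apply Finset.sum_congr rfl; intros; ring

lemma frob_bound (E : Matrix (Fin m) (Fin n) ℝ) (x : Fin n → ℝ) :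
    vnormSq (E.mulVec x) ≤ frobSq E * vnormSq x := by
  rw [frobSq, Finset.sum_mul]
  apply Finset.sum_le_sum
  intro i _
  simp only [Matrix.mulVec, dotProduct, vnormSq]
  exact Finset.sum_mul_sq_le_sq_mul_sq _ _ _

lemma abs_le_of_sq_le_sq {t c : ℝ} (h : t ^ 2 ≤ c ^ 2) (hc : 0 ≤ c) : |t| ≤ c :=
  abs_le.mpr ⟨by nlinarith, by nlinarith⟩


lemma bddAbove_set (A : Matrix (Fin m) (Fin n) ℝ) :
    BddAbove {r : ℝ | ∃ x : Fin n → ℝ, vnormSq x = 1 ∧ r = Real.sqrt (vnormSq (A.mulVec x))} := by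
  refine ⟨Real.sqrt (frobSq A), ?_⟩
  rintro r ⟨x, hx, rfl⟩
  apply Real.sqrt_le_sqrt
  have := frob_bound A x
  rwa [hx, mul_one] at this

lemma le_opNorm (A : Matrix (Fin m) (Fin n) ℝ) {x : Fin n → ℝ} (hx : vnormSq x = 1) :
    Real.sqrt (vnormSq (A.mulVec x)) ≤ opNorm A :=
  le_csSup (bddAbove_set A) ⟨x, hx, rfl⟩

lemma opNorm_le {A : Matrix (Fin m) (Fin n) ℝ} {c : ℝ} {x₀ : Fin n → ℝ}
    (hx₀ : vnormSq x₀ = 1)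
    (h : ∀ x : Fin n → ℝ, vnormSq x = 1 → Real.sqrt (vnormSq (A.mulVec x)) ≤ c) :
    opNorm A ≤ c :=
  csSup_le ⟨_, x₀, hx₀, rfl⟩ (by rintro r ⟨x, hx, rfl⟩; exact h x hx)


lemma vnormSq_zero : vnormSq (0 : Fin n → ℝ) = 0 := by simp [vnormSq]

lemma cont_vnormSq : Continuous (vnormSq : (Fin n → ℝ) → ℝ) :=
  continuous_finset_sum _ fun i _ => (continuous_apply i).pow 2

lemma cont_mulVec (C : Matrix (Fin m) (Fin n) ℝ) : Continuous fun w => C.mulVec w := by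
  apply continuous_pi
  intro i
  simp only [Matrix.mulVec, dotProduct]
  exact continuous_finset_sum _ fun j _ => continuous_const.mul (continuous_apply j)

lemma gap (C : Matrix (Fin m) (Fin n) ℝ) (σ : ℝ) (hσpos : 0 < σ) (v : Fin n → ℝ)
    (hsimple : ∀ w : Fin n → ℝ, vnormSq w = 1 → vdot w v = 0 →
      Real.sqrt (vnormSq (C.mulVec w)) < σ) :
    ∃ s : ℝ, 0 ≤ s ∧ s < σ ∧ ∀ w : Fin n → ℝ, vdot w v = 0 →
      vnormSq (C.mulVec w) ≤ s ^ 2 * vnormSq w := by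
  set K : Set (Fin n → ℝ) := {w | vnormSq w = 1 ∧ vdot w v = 0} with hK
  have hcont2 : Continuous fun w : Fin n → ℝ => vdot w v :=
    continuous_finset_sum _ fun i _ => (continuous_apply i).mul continuous_const
  have hclosed : IsClosed K :=
    (isClosed_eq cont_vnormSq continuous_const).inter (isClosed_eq hcont2 continuous_const)
  have hsub : K ⊆ Metric.closedBall 0 1 := by
    rintro w ⟨hw1, -⟩
    rw [Metric.mem_closedBall, dist_zero_right]
    rw [pi_norm_le_iff_of_nonneg (by norm_num)]
    intro i
    rw [Real.norm_eq_abs]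
    have h1 : w i ^ 2 ≤ 1 := by
      rw [← hw1]
      exact Finset.single_le_sum (fun j _ => sq_nonneg (w j)) (Finset.mem_univ i)
    exact abs_le_of_sq_le_sq (by simpa using h1) zero_le_one
  have hcompact : IsCompact K :=
    (isCompact_closedBall (0 : Fin n → ℝ) 1).of_isClosed_subset hclosed hsub
  have hf : Continuous fun w => vnormSq (C.mulVec w) := cont_vnormSq.comp (cont_mulVec C)
  -- helper: normalize
  have hnorm : ∀ w : Fin n → ℝ, vdot w v = 0 → vnormSq w ≠ 0 →
      ((Real.sqrt (vnormSq w))⁻¹ • w) ∈ K := by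
    intro w hw h0
    have hwpos : 0 < vnormSq w := lt_of_le_of_ne (vnormSq_nonneg w) (Ne.symm h0)
    have ht : (0:ℝ) < Real.sqrt (vnormSq w) := Real.sqrt_pos.2 hwpos
    constructor
    · rw [vnormSq_smul, inv_pow, Real.sq_sqrt hwpos.le]
      field_simp
    · rw [vdot_smul_left, hw, mul_zero]
  by_cases hne : K.Nonempty
  · obtain ⟨w₀, hw₀K, hmax⟩ := hcompact.exists_isMaxOn hne hf.continuousOn
    refine ⟨Real.sqrt (vnormSq (C.mulVec w₀)), Real.sqrt_nonneg _,
      hsimple w₀ hw₀K.1 hw₀K.2, ?_⟩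
    intro w hw
    by_cases hw0 : vnormSq w = 0
    · simp [vnormSq_eq_zero hw0, Matrix.mulVec_zero, vnormSq_zero]
    · have hwpos : 0 < vnormSq w := lt_of_le_of_ne (vnormSq_nonneg w) (Ne.symm hw0)
      have ht : (0:ℝ) < Real.sqrt (vnormSq w) := Real.sqrt_pos.2 hwpos
      have ht2 : Real.sqrt (vnormSq w) ^ 2 = vnormSq w := Real.sq_sqrt hwpos.le
      have hmem := hnorm w hw hw0
      have hle := hmax hmem
      simp only [Set.mem_setOf_eq] at hle
      rw [Matrix.mulVec_smul, vnormSq_smul] at hle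
      have hs2 : Real.sqrt (vnormSq (C.mulVec w₀)) ^ 2 = vnormSq (C.mulVec w₀) :=
        Real.sq_sqrt (vnormSq_nonneg _)
      rw [hs2]
      have hinv : ((Real.sqrt (vnormSq w))⁻¹) ^ 2 * vnormSq (C.mulVec w) =
          vnormSq (C.mulVec w) / vnormSq w := by
        rw [inv_pow, ht2]; ring
      rw [hinv] at hle
      rw [div_le_iff₀ hwpos] at hle
      linarith [hle]
  · refine ⟨0, le_refl 0, hσpos, ?_⟩
    intro w hw
    by_cases hw0 : vnormSq w = 0
    · simp [vnormSq_eq_zero hw0, Matrix.mulVec_zero, vnormSq_zero]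
    · exact absurd ⟨_, hnorm w hw hw0⟩ hne


lemma key (C E : Matrix (Fin m) (Fin n) ℝ) (σ s Kc : ℝ) (hσpos : 0 < σ)
    (u : Fin m → ℝ) (v : Fin n → ℝ) (hu : vnormSq u = 1) (hv : vnormSq v = 1)
    (hCv : C.mulVec v = σ • u) (hCu : Cᵀ.mulVec u = σ • v)
    (hs0 : 0 ≤ s) (hsσ : s < σ)
    (hsb : ∀ w : Fin n → ℝ, vdot w v = 0 → vnormSq (C.mulVec w) ≤ s ^ 2 * vnormSq w)
    (hK : 9 * σ ^ 2 + (σ ^ 2 - s ^ 2) ≤ Kc * (σ ^ 2 - s ^ 2))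
    (x : Fin n → ℝ) (hx : vnormSq x = 1) :
    vnormSq ((C + E).mulVec x) ≤
      σ ^ 2 + 2 * σ * vdot u (E.mulVec v) + Kc * frobSq E := by
  have hγ : 0 < σ ^ 2 - s ^ 2 := by nlinarith
  obtain ⟨F, hFdef⟩ : ∃ F : ℝ, F = Real.sqrt (frobSq E) := ⟨_, rfl⟩
  have hF0 : 0 ≤ F := hFdef ▸ Real.sqrt_nonneg _
  have hF2 : F ^ 2 = frobSq E := hFdef ▸ Real.sq_sqrt (frobSq_nonneg E)
  obtain ⟨d, hddef⟩ : ∃ d : ℝ, d = vdot u (E.mulVec v) := ⟨_, rfl⟩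
  rw [← hddef]
  obtain ⟨α, hαdef⟩ : ∃ a : ℝ, a = vdot x v := ⟨_, rfl⟩
  obtain ⟨w, hwdef⟩ : ∃ w : Fin n → ℝ, w = x - α • v := ⟨_, rfl⟩
  have hwv : vdot w v = 0 := by
    rw [hwdef, vdot_sub_left, vdot_smul_left, vdot_self, hv, ← hαdef]; ring
  have hα2 : α ^ 2 ≤ 1 := by
    have := cauchy x v; rw [hx, hv, one_mul, ← hαdef] at this; exact this
  have hxw : x = w + α • v := by rw [hwdef]; abel
  have hwn : vnormSq w = 1 - α ^ 2 := by
    have hw' : w = x + (-α) • v := by rw [hwdef]; ext i; simp; ring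
    rw [hw', vnormSq_add, vdot_smul_right, vnormSq_smul, hx, hv, ← hαdef]; ring
  obtain ⟨r, hrdef⟩ : ∃ r : ℝ, r = Real.sqrt (vnormSq w) := ⟨_, rfl⟩
  have hr0 : 0 ≤ r := hrdef ▸ Real.sqrt_nonneg _
  have hrw : r ^ 2 = vnormSq w := hrdef ▸ Real.sq_sqrt (vnormSq_nonneg w)
  have hr2 : r ^ 2 = 1 - α ^ 2 := by rw [hrw, hwn]
  have hr1 : r ≤ 1 := by nlinarith
  have hCx : C.mulVec x = C.mulVec w + (α * σ) • u := by
    conv_lhs => rw [hxw]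
    rw [Matrix.mulVec_add, Matrix.mulVec_smul, hCv, smul_smul]
  have hEx : E.mulVec x = E.mulVec w + α • E.mulVec v := by
    conv_lhs => rw [hxw]
    rw [Matrix.mulVec_add, Matrix.mulVec_smul]
  have hCwu : vdot (C.mulVec w) u = 0 := by
    rw [adjoint, hCu, vdot_smul_right, hwv, mul_zero]
  have hCx2 : vnormSq (C.mulVec x) = vnormSq (C.mulVec w) + α ^ 2 * σ ^ 2 := by
    rw [hCx, vnormSq_add, vdot_smul_right, hCwu, vnormSq_smul, hu]; ring
  have hCw2 : vnormSq (C.mulVec w) ≤ s ^ 2 * r ^ 2 := by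
    calc vnormSq (C.mulVec w) ≤ s ^ 2 * vnormSq w := hsb w hwv
      _ = s ^ 2 * r ^ 2 := by rw [hrw]
  have hExF : vnormSq (E.mulVec x) ≤ F ^ 2 := by
    have := frob_bound E x; rwa [hx, mul_one, ← hF2] at this
  have hEwF : vnormSq (E.mulVec w) ≤ F ^ 2 * r ^ 2 := by
    have := frob_bound E w; rwa [← hrw, ← hF2] at this
  have hEvF : vnormSq (E.mulVec v) ≤ F ^ 2 := by
    have := frob_bound E v; rwa [hv, mul_one, ← hF2] at this
  obtain ⟨t1, ht1def⟩ : ∃ t : ℝ, t = vdot (C.mulVec w) (E.mulVec x) := ⟨_, rfl⟩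
  obtain ⟨t2, ht2def⟩ : ∃ t : ℝ, t = vdot u (E.mulVec w) := ⟨_, rfl⟩
  have hb1 : |t1| ≤ s * (r * F) := by
    apply abs_le_of_sq_le_sq _ (by positivity)
    calc t1 ^ 2 ≤ vnormSq (C.mulVec w) * vnormSq (E.mulVec x) := ht1def ▸ cauchy _ _
      _ ≤ (s ^ 2 * r ^ 2) * F ^ 2 :=
        mul_le_mul hCw2 hExF (vnormSq_nonneg _) (by positivity)
      _ = (s * (r * F)) ^ 2 := by ring
  have hb2 : |t2| ≤ r * F := by
    apply abs_le_of_sq_le_sq _ (by positivity)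
    calc t2 ^ 2 ≤ vnormSq u * vnormSq (E.mulVec w) := ht2def ▸ cauchy _ _
      _ ≤ 1 * (F ^ 2 * r ^ 2) := by rw [hu]; exact mul_le_mul_of_nonneg_left hEwF zero_le_one
      _ = (r * F) ^ 2 := by ring
  have hb3 : |d| ≤ F := by
    apply abs_le_of_sq_le_sq _ hF0
    calc d ^ 2 ≤ vnormSq u * vnormSq (E.mulVec v) := hddef ▸ cauchy _ _
      _ ≤ 1 * F ^ 2 := by rw [hu]; exact mul_le_mul_of_nonneg_left hEvF zero_le_one
      _ = F ^ 2 := one_mul _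
  have hαabs : |α| ≤ 1 := abs_le_of_sq_le_sq (by simpa using hα2) zero_le_one
  have hdot : vdot (C.mulVec x) (E.mulVec x) = t1 + σ * (α ^ 2 * d) + σ * (α * t2) := by
    have hEu : vdot u (E.mulVec x) = α * d + t2 := by
      rw [hEx, vdot_add_right, vdot_smul_right, ← hddef, ← ht2def]; ring
    rw [hCx, vdot_add_left, vdot_smul_left, hEu, ← ht1def]; ring
  have step1 : vnormSq (C.mulVec x) ≤ σ ^ 2 - (σ ^ 2 - s ^ 2) * r ^ 2 := by
    calc vnormSq (C.mulVec x) = vnormSq (C.mulVec w) + α ^ 2 * σ ^ 2 := hCx2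
      _ ≤ s ^ 2 * r ^ 2 + α ^ 2 * σ ^ 2 := by linarith
      _ = σ ^ 2 - (σ ^ 2 - s ^ 2) * r ^ 2 := by
          rw [show α ^ 2 = 1 - r ^ 2 by linarith]; ring
  -- cross term bound
  have h1 : t1 ≤ σ * (r * F) := by
    have : s * (r * F) ≤ σ * (r * F) :=
      mul_le_mul_of_nonneg_right hsσ.le (by positivity)
    linarith [le_abs_self t1, hb1]
  have h2 : α * t2 ≤ r * F := by
    calc α * t2 ≤ |α * t2| := le_abs_self _
      _ = |α| * |t2| := abs_mul _ _
      _ ≤ 1 * (r * F) := mul_le_mul hαabs hb2 (abs_nonneg _) zero_le_one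
      _ = r * F := one_mul _
  have h3 : α ^ 2 * d ≤ d + r * F := by
    have hd1 : -F ≤ d := by
      have := neg_abs_le d; linarith
    have hmul : r ^ 2 * (-F) ≤ r ^ 2 * d := mul_le_mul_of_nonneg_left hd1 (sq_nonneg r)
    have hrF : r ^ 2 * F ≤ r * F := by
      nlinarith [mul_le_mul_of_nonneg_right hr1 (mul_nonneg hr0 hF0)]
    have hαr : α ^ 2 = 1 - r ^ 2 := by linarith [hr2]
    nlinarith [hmul, hrF]
  have h2' : σ * (α * t2) ≤ σ * (r * F) := mul_le_mul_of_nonneg_left h2 hσpos.le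
  have h3' : σ * (α ^ 2 * d) ≤ σ * (d + r * F) := mul_le_mul_of_nonneg_left h3 hσpos.le
  have step2 : vdot (C.mulVec x) (E.mulVec x) ≤ σ * d + 3 * σ * (r * F) := by
    rw [hdot]; nlinarith [h1, h2', h3']
  have h6 : 6 * σ * (r * F) ≤ (σ ^ 2 - s ^ 2) * r ^ 2 + (Kc - 1) * F ^ 2 := by
    nlinarith [sq_nonneg (3 * σ * F - (σ ^ 2 - s ^ 2) * r), hγ,
      mul_le_mul_of_nonneg_right hK (sq_nonneg F)]
  have hfull : vnormSq ((C + E).mulVec x) =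
      vnormSq (C.mulVec x) + 2 * vdot (C.mulVec x) (E.mulVec x) + vnormSq (E.mulVec x) := by
    rw [Matrix.add_mulVec, vnormSq_add]
  rw [← hF2, hfull]
  linarith [step1, step2, hExF, h6]

end S11

/-- if `σ = ‖C‖_op > 0`, `u, v` are unit singular vectors with
`Cv = σu`, `Cᵀu = σv` and the largest singular value is simple
(`‖Cw‖ < σ` for every unit `w ⊥ v`), then `E ↦ ‖C+E‖_op²` is Fréchet
differentiable at `0` with derivative `E ↦ 2σ·uᵀEv`:
for every `ε > 0` there is `δ > 0` with
`|‖C+E‖_op² − σ² − 2σ·uᵀEv| ≤ ε‖E‖_F` whenever `0 < ‖E‖_F < δ`. -/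
theorem statement11 (M N : ℕ) (C : Matrix (Fin M) (Fin N) ℝ) (σ : ℝ)
    (hσ : σ = opNorm C) (hσpos : 0 < σ)
    (u : Fin M → ℝ) (v : Fin N → ℝ) (hu : vnormSq u = 1) (hv : vnormSq v = 1)
    (hCv : C.mulVec v = σ • u) (hCu : Cᵀ.mulVec u = σ • v)
    (hsimple : ∀ w : Fin N → ℝ, vnormSq w = 1 → vdot w v = 0 →
      Real.sqrt (vnormSq (C.mulVec w)) < σ) :
    ∀ ε : ℝ, 0 < ε → ∃ δ : ℝ, 0 < δ ∧
      ∀ E : Matrix (Fin M) (Fin N) ℝ,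
        0 < Real.sqrt (frobSq E) → Real.sqrt (frobSq E) < δ →
        |opNorm (C + E) ^ 2 - σ ^ 2 - 2 * σ * vdot u (E.mulVec v)| ≤
          ε * Real.sqrt (frobSq E) := by

  intro ε hε
  obtain ⟨s, hs0, hsσ, hsb⟩ := S11.gap C σ hσpos v hsimple
  have hγ : 0 < σ ^ 2 - s ^ 2 := by nlinarith
  set Kc : ℝ := (9 * σ ^ 2 + (σ ^ 2 - s ^ 2)) / (σ ^ 2 - s ^ 2) with hKc
  have hKcpos : 0 < Kc := div_pos (by nlinarith) hγ
  have hK : 9 * σ ^ 2 + (σ ^ 2 - s ^ 2) ≤ Kc * (σ ^ 2 - s ^ 2) := by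
    rw [hKc, div_mul_cancel₀ _ hγ.ne']
  refine ⟨ε / Kc, div_pos hε hKcpos, ?_⟩
  intro E hE0 hEδ
  set F := Real.sqrt (frobSq E) with hF
  have hF2 : F ^ 2 = frobSq E := Real.sq_sqrt (S11.frobSq_nonneg E)
  set d := vdot u (E.mulVec v) with hd
  have hCEv : vnormSq ((C + E).mulVec v) = σ ^ 2 + 2 * σ * d + vnormSq (E.mulVec v) := by
    rw [Matrix.add_mulVec, hCv, S11.vnormSq_add, S11.vnormSq_smul, hu, S11.vdot_smul_left, ← hd]
    ring
  have hτmem := S11.le_opNorm (C + E) hv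
  have hτ0 : 0 ≤ opNorm (C + E) := le_trans (Real.sqrt_nonneg _) hτmem
  have hlow : σ ^ 2 + 2 * σ * d ≤ opNorm (C + E) ^ 2 := by
    have h1 : vnormSq ((C + E).mulVec v) ≤ opNorm (C + E) ^ 2 := by
      have h2 := pow_le_pow_left₀ (Real.sqrt_nonneg _) hτmem 2
      rwa [Real.sq_sqrt (S11.vnormSq_nonneg _)] at h2
    rw [hCEv] at h1
    linarith [S11.vnormSq_nonneg (E.mulVec v)]
  have hupper : ∀ x : Fin N → ℝ, vnormSq x = 1 →
      vnormSq ((C + E).mulVec x) ≤ σ ^ 2 + 2 * σ * d + Kc * frobSq E :=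
    fun x hx => S11.key C E σ s Kc hσpos u v hu hv hCv hCu hs0 hsσ hsb hK x hx
  have hRnn : 0 ≤ σ ^ 2 + 2 * σ * d + Kc * frobSq E := by
    have := hupper v hv
    linarith [S11.vnormSq_nonneg ((C + E).mulVec v)]
  have hup2 : opNorm (C + E) ^ 2 ≤ σ ^ 2 + 2 * σ * d + Kc * frobSq E := by
    have hup : opNorm (C + E) ≤ Real.sqrt (σ ^ 2 + 2 * σ * d + Kc * frobSq E) :=
      S11.opNorm_le hv fun x hx => Real.sqrt_le_sqrt (hupper x hx)
    have h3 := pow_le_pow_left₀ hτ0 hup 2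
    rwa [Real.sq_sqrt hRnn] at h3
  have hKF : Kc * frobSq E ≤ ε * F := by
    have h4 : F * Kc < ε := (lt_div_iff₀ hKcpos).1 hEδ
    calc Kc * frobSq E = (F * Kc) * F := by rw [← hF2]; ring
      _ ≤ ε * F := mul_le_mul_of_nonneg_right h4.le hE0.le
  have hεF : 0 ≤ ε * F := mul_nonneg hε.le hE0.le
  rw [abs_le]
  constructor <;> linarith

end
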